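/- Let f : (0,∞) → ℝ be f(x) = x + log x (the radial Simanca potential, x = |z|²), and set D(x) = f'(x)·(f'(x) + x·f''(x)) and ψ(x) = log D(x). Then for all x > 0: (1/(f'(x) + x·f''(x)))·(ψ'(x) + x·ψ''(x)) + (1/f'(x))·ψ'(x) = 0. Explicitly, with f'(x) = 1 + 1/x, f'(x) + x f''(x) = 1, and D(x) = 1 + 1/x, the identity (ψ'(x) + x·ψ''(x)) + (x/(x+1))·ψ'(x) = 0 holds for all x > 0. -/

import Mathlib

/-- Scalar-flatness of the Simanca metric: for the radial Simanca potential
`f(x) = x + log x`, with `D(x) = f'(x)(f'(x) + x f''(x))` and `ψ = log D`, one has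
`(1/(f' + x f''))(ψ' + x ψ'') + (1/f') ψ' = 0` on `(0,∞)`; explicitly `f'(x) = 1 + 1/x`,
`f'(x) + x f''(x) = 1`, `D(x) = 1 + 1/x` and `(ψ' + x ψ'') + (x/(x+1)) ψ' = 0`. -/
theorem simanca_scalar_flat
    (f D ψ : ℝ → ℝ)
    (hf : f = fun x => x + Real.log x)
    (hD : D = fun x => deriv f x * (deriv f x + x * deriv (deriv f) x))
    (hψ : ψ = fun x => Real.log (D x)) :
    ∀ x ∈ Set.Ioi (0 : ℝ),
      deriv f x = 1 + 1 / x ∧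
      deriv f x + x * deriv (deriv f) x = 1 ∧
      D x = 1 + 1 / x ∧
      (1 / (deriv f x + x * deriv (deriv f) x)) * (deriv ψ x + x * deriv (deriv ψ) x)
        + (1 / deriv f x) * deriv ψ x = 0 ∧
      (deriv ψ x + x * deriv (deriv ψ) x) + (x / (x + 1)) * deriv ψ x = 0 := by
  subst hf hD hψ
  have hf' : ∀ y : ℝ, y ≠ 0 → deriv (fun x => x + Real.log x) y = 1 + y⁻¹ := by
    intro y hy
    exact ((hasDerivAt_id y).add (Real.hasDerivAt_log hy)).deriv
  have hf'' : ∀ y : ℝ, y ≠ 0 →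
      deriv (deriv (fun x => x + Real.log x)) y = -(y ^ 2)⁻¹ := by
    intro y hy
    have hev : deriv (fun x => x + Real.log x) =ᶠ[nhds y] fun t => 1 + t⁻¹ :=
      Filter.eventuallyEq_of_mem (isOpen_ne.mem_nhds hy) (fun t ht => hf' t ht)
    rw [hev.deriv_eq]
    simpa using ((hasDerivAt_const y (1 : ℝ)).add (hasDerivAt_inv hy)).deriv
  intro x hx
  have hx0 : (0 : ℝ) < x := hx
  have hxne : x ≠ 0 := ne_of_gt hx0
  have hDval : ∀ y : ℝ, y ≠ 0 →
      deriv (fun x => x + Real.log x) y *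
        (deriv (fun x => x + Real.log x) y +
          y * deriv (deriv (fun x => x + Real.log x)) y) = 1 + y⁻¹ := by
    intro y hy
    rw [hf' y hy, hf'' y hy]
    field_simp
    ring
  -- ψ agrees with log(y+1) - log y on a neighborhood of x
  have hψev : (fun x_1 => Real.log
      (deriv (fun x => x + Real.log x) x_1 *
        (deriv (fun x => x + Real.log x) x_1 +
          x_1 * deriv (deriv (fun x => x + Real.log x)) x_1)))
      =ᶠ[nhds x] fun y => Real.log (y + 1) - Real.log y := by
    refine Filter.eventuallyEq_of_mem (isOpen_Ioi.mem_nhds hx0) (fun y hy => ?_)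
    have hy0 : (0 : ℝ) < y := hy
    have hyne : y ≠ 0 := ne_of_gt hy0
    rw [hDval y hyne]
    have : 1 + y⁻¹ = (y + 1) / y := by field_simp
    rw [this, Real.log_div (by positivity) hyne]
  have hg' : ∀ y : ℝ, 0 < y →
      deriv (fun y => Real.log (y + 1) - Real.log y) y = (y + 1)⁻¹ - y⁻¹ := by
    intro y hy
    have h1 : HasDerivAt (fun y : ℝ => Real.log (y + 1)) (y + 1)⁻¹ y := by
      simpa using (HasDerivAt.log ((hasDerivAt_id y).add_const 1) (by positivity))
    exact (h1.sub (Real.hasDerivAt_log (ne_of_gt hy))).deriv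
  have hψ' : deriv (fun x_1 => Real.log
      (deriv (fun x => x + Real.log x) x_1 *
        (deriv (fun x => x + Real.log x) x_1 +
          x_1 * deriv (deriv (fun x => x + Real.log x)) x_1))) x = (x + 1)⁻¹ - x⁻¹ := by
    rw [hψev.deriv_eq]; exact hg' x hx0
  have hψ'' : deriv (deriv (fun x_1 => Real.log
      (deriv (fun x => x + Real.log x) x_1 *
        (deriv (fun x => x + Real.log x) x_1 +
          x_1 * deriv (deriv (fun x => x + Real.log x)) x_1)))) x
      = -((x + 1) ^ 2)⁻¹ + (x ^ 2)⁻¹ := by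
    have hev2 : deriv (fun x_1 => Real.log
        (deriv (fun x => x + Real.log x) x_1 *
          (deriv (fun x => x + Real.log x) x_1 +
            x_1 * deriv (deriv (fun x => x + Real.log x)) x_1)))
        =ᶠ[nhds x] fun y => (y + 1)⁻¹ - y⁻¹ := by
      have := hψev.deriv
      refine this.trans ?_
      refine Filter.eventuallyEq_of_mem (isOpen_Ioi.mem_nhds hx0) (fun y hy => hg' y hy)
    rw [hev2.deriv_eq]
    have h1 : HasDerivAt (fun y : ℝ => (y + 1)⁻¹) (-((x + 1) ^ 2)⁻¹) x := by
      simpa [Function.comp_def] using (hasDerivAt_inv (x := x + 1) (by positivity)).comp x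
        ((hasDerivAt_id x).add_const 1)
    have h2 : HasDerivAt (fun y : ℝ => y⁻¹) (-(x ^ 2)⁻¹) x := hasDerivAt_inv hxne
    simpa [sub_neg_eq_add, Pi.sub_def] using (h1.sub h2).deriv
  have hx1 : x + 1 ≠ 0 := by positivity
  have key : ((x + 1)⁻¹ - x⁻¹ + x * (-((x + 1) ^ 2)⁻¹ + (x ^ 2)⁻¹))
      + (x / (x + 1)) * ((x + 1)⁻¹ - x⁻¹) = 0 := by
    field_simp
    ring
  refine ⟨by rw [hf' x hxne, one_div], ?_, by simpa [one_div] using hDval x hxne, ?_, ?_⟩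
  · rw [hf' x hxne, hf'' x hxne]
    field_simp
    ring
  · rw [hf' x hxne, hf'' x hxne, hψ', hψ'']
    have hden : (1 : ℝ) + x⁻¹ + x * -(x ^ 2)⁻¹ = 1 := by
      field_simp
      ring
    have h3 : (1 : ℝ) + x⁻¹ = (x + 1) / x := by
      field_simp
    rw [hden, h3, one_div_div]
    linear_combination key
  · rw [hψ', hψ'']
    exact key
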